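/- Let (H →∂ G, ▷) be a crossed module. Let g₁₂, g₁₃, g₁₄, g₂₃, g₂₄, g₃₄ ∈ G and h₁₂₃, h₁₂₄, h₁₃₄, h₂₃₄ ∈ H. Assume: (1) g₂₄ = ∂(h₁₂₄)⁻¹ g₁₄ g₁₂⁻¹ (flatness of face 124); (2) h₂₃₄ = h₁₂₄⁻¹ h₁₃₄ (g₃₄ ▷ h₁₂₃) (flatness of tetrahedron 1234); (3) g₁₃ = ∂(h₁₂₃) g₂₃ g₁₂ (flatness of face 123); (4) g₁₄ = ∂(h₁₃₄) g₃₄ g₁₃ (flatness of face 134). Then ∂(h₂₃₄) g₃₄ g₂₃ g₂₄⁻¹ = 1 (flatness of face 234). -/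
import Mathlib

/-- A crossed module `(H --∂--> G, ▷)`: groups `G`, `H`, a group homomorphism
`δ : H →* G`, and a left action of `G` on `H` in which every `g : G` acts as a
group automorphism of `H` (encoded as `act : G →* MulAut H`), satisfying the
equivariance axiom and the Peiffer identity. -/
structure CrossedModule (G H : Type*) [Group G] [Group H] where
  δ : H →* G
  act : G →* MulAut H
  equivariance : ∀ (g : G) (h : H), δ (act g h) = g * δ h * g⁻¹
  peiffer : ∀ (h h' : H), act (δ h) h' = h * h' * h⁻¹

/-- Flatness of faces 124, 123, 134 and of tetrahedron 1234 implies flatness of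
face 234. -/
theorem face234_flat {G H : Type*} [Group G] [Group H] (X : CrossedModule G H)
    (g₁₂ g₁₃ g₁₄ g₂₃ g₂₄ g₃₄ : G) (h₁₂₃ h₁₂₄ h₁₃₄ h₂₃₄ : H)
    (h1 : g₂₄ = (X.δ h₁₂₄)⁻¹ * g₁₄ * g₁₂⁻¹)
    (h2 : h₂₃₄ = h₁₂₄⁻¹ * h₁₃₄ * X.act g₃₄ h₁₂₃)
    (h3 : g₁₃ = X.δ h₁₂₃ * g₂₃ * g₁₂)
    (h4 : g₁₄ = X.δ h₁₃₄ * g₃₄ * g₁₃) :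
    X.δ h₂₃₄ * g₃₄ * g₂₃ * g₂₄⁻¹ = 1 := by
  subst h1 h2 h3 h4
  simp only [map_mul, map_inv, X.equivariance]
  group
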